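/- Let I ⊂ K[x_1,…,x_n] be an 𝔪-primary monomial ideal that is equigenerated, i.e. all elements of G(I) have the same total degree d (so that μ_i = x_i^d for each i), and let J = ⟨x_1^d,…,x_n^d⟩. Then the following are equivalent: (1) I is Freiman, i.e. |G(I^2)| = n·|G(I)| − n(n−1)/2; (2) I is a very good ideal; (3) I^2 = I·J. -/

import Mathlib

open MvPolynomial

namespace GasanovaRR

/-- The monomial `x^α` in `K[x_1,…,x_n]`. -/
noncomputable def mono (K : Type*) [Field K] {n : ℕ} (α : Fin n → ℕ) :
    MvPolynomial (Fin n) K :=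
  MvPolynomial.monomial (Finsupp.equivFunOnFinite.symm α) 1

/-- `I` is a monomial ideal: it is generated by a set of monomials. -/
def IsMonomialIdeal {K : Type*} [Field K] {n : ℕ}
    (I : Ideal (MvPolynomial (Fin n) K)) : Prop :=
  ∃ A : Set (Fin n → ℕ), I = Ideal.span (mono K '' A)

/-- `x^α` is a minimal monomial generator of `I`, i.e. `x^α ∈ G(I)`:
`x^α ∈ I` and no monomial in `I` strictly divides it. -/
def IsMinGen {K : Type*} [Field K] {n : ℕ}
    (I : Ideal (MvPolynomial (Fin n) K)) (α : Fin n → ℕ) : Prop :=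
  mono K α ∈ I ∧ ∀ β : Fin n → ℕ, mono K β ∈ I → β ≤ α → β = α

/-- The point `α` lies in the box `B_{a_1,…,a_n}` (for box sizes `d_1,…,d_n`). -/
def InBox {n : ℕ} (d a α : Fin n → ℕ) : Prop :=
  ∀ i, a i * d i ≤ α i ∧ α i ≤ (a i + 1) * d i

/-- `I` is a good ideal (w.r.t. box sizes `d`): for every `l ≥ 1`, every minimal
generator of `I^l` lies in a box whose coordinate sum is `l - 1`. -/
def IsGood {K : Type*} [Field K] {n : ℕ}
    (I : Ideal (MvPolynomial (Fin n) K)) (d : Fin n → ℕ) : Prop :=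
  ∀ l : ℕ, 1 ≤ l → ∀ α : Fin n → ℕ, IsMinGen (I ^ l) α →
    ∃ a : Fin n → ℕ, InBox d a α ∧ ∑ i, a i = l - 1

/-- `I` is an `𝔪`-primary monomial ideal whose minimal generating set contains
`μ_i = x_i^{d_i}` with `d_i > 0` for each `i`. -/
def MPrimaryWithCorners {K : Type*} [Field K] {n : ℕ}
    (I : Ideal (MvPolynomial (Fin n) K)) (d : Fin n → ℕ) : Prop :=
  IsMonomialIdeal I ∧ I ≠ ⊤ ∧ (∀ i, 0 < d i) ∧ ∀ i, IsMinGen I (Pi.single i (d i))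

/-- The ideal `I_{a_1,…,a_n}` associated to the box `B_{a_1,…,a_n}`, generated by
`m / (μ_1^{a_1}⋯μ_n^{a_n})` for `m ∈ B_{a_1,…,a_n} ∩ G(I^l)`, `l = a_1+⋯+a_n+1`. -/
noncomputable def boxIdeal {K : Type*} [Field K] {n : ℕ}
    (I : Ideal (MvPolynomial (Fin n) K)) (d a : Fin n → ℕ) :
    Ideal (MvPolynomial (Fin n) K) :=
  Ideal.span ((fun α => mono K (α - fun i => a i * d i)) ''
    {α | InBox d a α ∧ IsMinGen (I ^ (∑ i, a i + 1)) α})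

/-- The Ratliff–Rush closure `Ĩ = ⋃_{k ≥ 0} (I^{k+1} : I^k)`. -/
noncomputable def ratliffRush {K : Type*} [Field K] {n : ℕ}
    (I : Ideal (MvPolynomial (Fin n) K)) : Ideal (MvPolynomial (Fin n) K) :=
  ⨆ k : ℕ, (I ^ (k + 1)).colon ((I ^ k : Ideal (MvPolynomial (Fin n) K)) : Set (MvPolynomial (Fin n) K))

/-- The cone in `ℕ^n` with set `S` of fixed coordinates and vertex `v`. -/
def Cone {n : ℕ} (S : Set (Fin n)) (v : Fin n → ℕ) : Set (Fin n → ℕ) :=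
  {b | (∀ i ∈ S, b i = v i) ∧ ∀ i ∉ S, v i ≤ b i}

/-- `I` is a very good ideal: it is good and `I_{a_1,…,a_n} = I` for all boxes. -/
def IsVeryGood {K : Type*} [Field K] {n : ℕ}
    (I : Ideal (MvPolynomial (Fin n) K)) (d : Fin n → ℕ) : Prop :=
  IsGood I d ∧ ∀ a : Fin n → ℕ, boxIdeal I d a = I


/-! ### Auxiliary material -/

open Pointwise

section Aux

variable {K : Type*} [Field K] {n : ℕ}

lemma eq_of_le_of_sum_eq {α β : Fin n → ℕ} (h : α ≤ β)
    (hs : ∑ i, α i = ∑ i, β i) : α = β := by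
  funext i
  by_contra hne
  have hlt : α i < β i := lt_of_le_of_ne (h i) hne
  have : ∑ i, α i < ∑ i, β i :=
    Finset.sum_lt_sum (fun i _ => h i) ⟨i, Finset.mem_univ i, hlt⟩
  omega

lemma eq_single_of_coord {d : ℕ} {β : Fin n → ℕ} {i : Fin n}
    (hs : ∑ j, β j = d) (hi : β i = d) : β = Pi.single i d := by
  have h0 : ∀ j, j ≠ i → β j = 0 := by
    intro j hj
    have := Finset.add_sum_erase Finset.univ β (Finset.mem_univ i)
    have hj' : j ∈ Finset.univ.erase i := Finset.mem_erase.2 ⟨hj, Finset.mem_univ j⟩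
    have hle : β j ≤ ∑ k ∈ Finset.univ.erase i, β k :=
      Finset.single_le_sum (fun k _ => Nat.zero_le _) hj'
    omega
  funext j
  by_cases hj : j = i
  · subst hj; simp [hi]
  · simp [Pi.single_eq_of_ne hj, h0 j hj]

lemma exists_single_of_sum_eq_one {a : Fin n → ℕ} (h : ∑ i, a i = 1) :
    ∃ i, a = Pi.single i 1 := by
  have : ∃ i, 1 ≤ a i := by
    by_contra hc
    push_neg at hc
    have : ∀ i ∈ Finset.univ, a i = 0 := fun i _ => by have := hc i; omega
    rw [Finset.sum_eq_zero this] at h; omega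
  obtain ⟨i, hi⟩ := this
  have hai : a i = 1 := by
    have := Finset.add_sum_erase Finset.univ a (Finset.mem_univ i)
    have h2 : (0:ℕ) ≤ ∑ k ∈ Finset.univ.erase i, a k := Nat.zero_le _
    omega
  exact ⟨i, eq_single_of_coord h hai⟩

lemma sum_single (i : Fin n) (c : ℕ) : ∑ j, Pi.single i c j = c := by
  classical
  rw [Finset.sum_pi_single']
  simp

/-- l-fold sumset -/
def nsum : ℕ → Set (Fin n → ℕ) → Set (Fin n → ℕ)
  | 0, _ => {0}
  | (l+1), A => A + nsum l A

lemma mem_nsum_sum {A : Set (Fin n → ℕ)} {d : ℕ} (hA : ∀ α ∈ A, ∑ i, α i = d) :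
    ∀ l, ∀ α ∈ nsum l A, ∑ i, α i = l * d := by
  intro l
  induction l with
  | zero => intro α hα; rw [Set.mem_singleton_iff.1 hα]; simp
  | succ l ih =>
    intro α hα
    obtain ⟨x, hx, y, hy, rfl⟩ := Set.mem_add.1 hα
    have : ∑ i, (x + y) i = ∑ i, x i + ∑ i, y i := by
      simp [Finset.sum_add_distrib]
    rw [this, hA x hx, ih y hy]; ring

lemma nsum_two (A : Set (Fin n → ℕ)) : nsum 2 A = A + A := by
  show A + (A + ({0} : Set (Fin n → ℕ))) = A + A
  rw [Set.add_singleton]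
  simp

/-- scaled vector characterization of nsum of the corner set -/
lemma nsum_corners (d : ℕ) :
    ∀ l, nsum l (Set.range fun i : Fin n => Pi.single i d) =
      {α | ∃ b : Fin n → ℕ, ∑ i, b i = l ∧ α = fun j => b j * d} := by
  intro l
  induction l with
  | zero =>
    ext α
    simp only [nsum, Set.mem_singleton_iff, Set.mem_setOf_eq]
    constructor
    · rintro rfl
      exact ⟨0, by simp, by funext j; simp⟩
    · rintro ⟨b, hb, rfl⟩
      have : ∀ j, b j = 0 := by
        intro j
        have : b j ≤ ∑ i, b i :=
          Finset.single_le_sum (fun k _ => Nat.zero_le _) (Finset.mem_univ j)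
        omega
      funext j; simp [this j]
  | succ l ih =>
    ext α
    show α ∈ _ + nsum l _ ↔ _
    rw [ih]
    constructor
    · rintro ⟨x, ⟨i, rfl⟩, y, ⟨b, hb, rfl⟩, rfl⟩
      refine ⟨b + (Pi.single i 1 : Fin n → ℕ), ?_, ?_⟩
      · have : ∀ j, (b + (Pi.single i 1 : Fin n → ℕ)) j
            = b j + (Pi.single i 1 : Fin n → ℕ) j := fun j => rfl
        simp only [this]
        rw [Finset.sum_add_distrib, hb, sum_single]
      · funext j
        by_cases hj : j = i
        · subst hj; simp [add_mul, add_comm]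
        · simp [Pi.single_eq_of_ne hj, hj]
    · rintro ⟨b, hb, rfl⟩
      have : ∃ i, 1 ≤ b i := by
        by_contra hc
        push_neg at hc
        have : ∀ i ∈ Finset.univ, b i = 0 := fun i _ => by have := hc i; omega
        rw [Finset.sum_eq_zero this] at hb; omega
      obtain ⟨i, hi⟩ := this
      obtain ⟨m, hm⟩ := Nat.exists_eq_add_of_le hi
      set b' : Fin n → ℕ := fun j => b j - (Pi.single i 1 : Fin n → ℕ) j with hb'
      have hb'i : b' i = m := by simp [hb']; omega
      have hb'j : ∀ j, j ≠ i → b' j = b j := by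
        intro j hj; simp [hb', Pi.single_eq_of_ne hj]
      refine ⟨Pi.single i d, ⟨i, rfl⟩, fun j => b' j * d, ⟨b', ?_, rfl⟩, ?_⟩
      · have key : ∑ j, b' j + ∑ j, (Pi.single i 1 : Fin n → ℕ) j = ∑ j, b j := by
          rw [← Finset.sum_add_distrib]
          apply Finset.sum_congr rfl
          intro j _
          by_cases hj : j = i
          · subst hj; rw [hb'i]; simp; omega
          · rw [hb'j j hj]; simp [Pi.single_eq_of_ne hj]
        rw [sum_single] at key
        omega
      · funext j
        show (Pi.single i d : Fin n → ℕ) j + b' j * d = b j * d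
        by_cases hj : j = i
        · subst hj; rw [hb'i]; simp [hm]; ring
        · rw [hb'j j hj]; simp [Pi.single_eq_of_ne hj]

section Counting
variable {d : ℕ} {A : Set (Fin n → ℕ)}

lemma coord_le {α : Fin n → ℕ} (hα : ∑ i, α i = d) (i : Fin n) : α i ≤ d := by
  have : α i ≤ ∑ j, α j :=
    Finset.single_le_sum (fun k _ => Nat.zero_le _) (Finset.mem_univ i)
  omega

lemma pair_inter (hAd : ∀ α ∈ A, ∑ i, α i = d)
    (hcor : ∀ i : Fin n, Pi.single i d ∈ A) {i j : Fin n} (hij : i ≠ j) :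
    ((fun a => a + (Pi.single i d : Fin n → ℕ)) '' A) ∩
      ((fun a => a + (Pi.single j d : Fin n → ℕ)) '' A) =
      {(Pi.single i d + Pi.single j d : Fin n → ℕ)} := by
  ext p
  constructor
  · rintro ⟨⟨a, ha, hpa⟩, ⟨a', ha', hpa'⟩⟩
    have hpa : a + (Pi.single i d : Fin n → ℕ) = p := hpa
    have hpa' : a' + (Pi.single j d : Fin n → ℕ) = p := hpa'
    have h1 := congrFun hpa i
    have h2 := congrFun hpa' i
    simp only [Pi.add_apply, Pi.single_eq_same] at h1 h2
    rw [Pi.single_eq_of_ne hij] at h2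
    have h3 : a' i ≤ d := coord_le (hAd a' ha') i
    have h4 : a' i = d := by omega
    have h5 : a' = Pi.single i d := eq_single_of_coord (hAd a' ha') h4
    rw [Set.mem_singleton_iff, ← hpa', h5]
  · rintro rfl
    refine ⟨⟨Pi.single j d, hcor j, add_comm _ _⟩, ⟨Pi.single i d, hcor i, rfl⟩⟩

lemma union_card (hd : 0 < d) (hAfin : A.Finite) (hAd : ∀ α ∈ A, ∑ i, α i = d)
    (hcor : ∀ i : Fin n, Pi.single i d ∈ A) :
    ∀ s : Finset (Fin n),
      (⋃ i ∈ s, (fun a => a + (Pi.single i d : Fin n → ℕ)) '' A).ncard + s.card.choose 2 =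
        s.card * A.ncard := by
  intro s
  induction s using Finset.induction_on with
  | empty => simp
  | @insert i s hi ih =>
    have himgfin : ∀ k : Fin n, ((fun a => a + (Pi.single k d : Fin n → ℕ)) '' A).Finite :=
      fun k => hAfin.image _
    have hUfin : (⋃ j ∈ s, (fun a => a + (Pi.single j d : Fin n → ℕ)) '' A).Finite :=
      Set.Finite.biUnion s.finite_toSet (fun j _ => himgfin j)
    have hunion : (⋃ j ∈ insert i s, (fun a => a + (Pi.single j d : Fin n → ℕ)) '' A) =
        ((fun a => a + (Pi.single i d : Fin n → ℕ)) '' A) ∪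
          (⋃ j ∈ s, (fun a => a + (Pi.single j d : Fin n → ℕ)) '' A) := by
      rw [Finset.set_biUnion_insert]
    have hinter : ((fun a => a + (Pi.single i d : Fin n → ℕ)) '' A) ∩
        (⋃ j ∈ s, (fun a => a + (Pi.single j d : Fin n → ℕ)) '' A) =
        (fun j : Fin n => (Pi.single i d + Pi.single j d : Fin n → ℕ)) '' (s : Set (Fin n)) := by
      ext p
      simp only [Set.mem_inter_iff, Set.mem_iUnion, Set.mem_image, exists_prop,
        Finset.mem_coe]
      constructor
      · rintro ⟨hpi, j, hjs, hpj⟩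
        have hij : i ≠ j := fun h => hi (h ▸ hjs)
        have hp : p ∈ ({(Pi.single i d + Pi.single j d : Fin n → ℕ)} : Set _) := by
          rw [← pair_inter hAd hcor hij]
          exact ⟨hpi, hpj⟩
        exact ⟨j, hjs, hp.symm⟩
      · rintro ⟨j, hjs, rfl⟩
        have hij : i ≠ j := fun h => hi (h ▸ hjs)
        have hp : (Pi.single i d + Pi.single j d : Fin n → ℕ) ∈
            ((fun a => a + (Pi.single i d : Fin n → ℕ)) '' A) ∩
              ((fun a => a + (Pi.single j d : Fin n → ℕ)) '' A) := by
          rw [pair_inter hAd hcor hij]; rfl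
        exact ⟨hp.1, j, hjs, hp.2⟩
    have hintercard : (((fun j : Fin n => (Pi.single i d + Pi.single j d : Fin n → ℕ)) ''
        (s : Set (Fin n)))).ncard = s.card := by
      rw [Set.ncard_image_of_injOn, Set.ncard_coe_finset]
      intro j1 hj1 j2 hj2 heq
      by_contra hne
      have h1 := congrFun heq j1
      simp only [Pi.add_apply, Pi.single_eq_same] at h1
      rw [Pi.single_eq_of_ne hne] at h1
      omega
    have hcard1 : ((fun a => a + (Pi.single i d : Fin n → ℕ)) '' A).ncard = A.ncard :=
      Set.ncard_image_of_injective A (add_left_injective _)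
    have key := Set.ncard_union_add_ncard_inter
      ((fun a => a + (Pi.single i d : Fin n → ℕ)) '' A)
      (⋃ j ∈ s, (fun a => a + (Pi.single j d : Fin n → ℕ)) '' A) (himgfin i) hUfin
    rw [hinter, hintercard, hcard1] at key
    rw [hunion, Finset.card_insert_of_notMem hi]
    have hch : (s.card + 1).choose 2 = s.card.choose 1 + s.card.choose 2 :=
      Nat.choose_succ_succ s.card 1
    rw [hch, Nat.choose_one_right, Nat.succ_mul]
    omega

lemma add_corners_eq :
    A + (Set.range fun i : Fin n => Pi.single i d) =
      ⋃ i ∈ (Finset.univ : Finset (Fin n)),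
        (fun a => a + (Pi.single i d : Fin n → ℕ)) '' A := by
  ext p
  simp only [Set.mem_add, Set.mem_iUnion, Set.mem_image, Set.mem_range,
    Finset.mem_univ, exists_prop, true_and]
  constructor
  · rintro ⟨a, ha, b, ⟨i, rfl⟩, rfl⟩
    exact ⟨i, a, ha, rfl⟩
  · rintro ⟨i, a, ha, rfl⟩
    exact ⟨a, ha, Pi.single i d, ⟨i, rfl⟩, rfl⟩

lemma card_A_add_D (hd : 0 < d) (hAfin : A.Finite) (hAd : ∀ α ∈ A, ∑ i, α i = d)
    (hcor : ∀ i : Fin n, Pi.single i d ∈ A) :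
    (A + (Set.range fun i : Fin n => Pi.single i d)).ncard + n.choose 2 =
      n * A.ncard := by
  rw [add_corners_eq]
  have := union_card hd hAfin hAd hcor Finset.univ
  rwa [Finset.card_univ, Fintype.card_fin] at this

end Counting

/-! ### Monomial ideal infrastructure -/

lemma symm_add (α β : Fin n → ℕ) :
    Finsupp.equivFunOnFinite.symm (α + β) =
      Finsupp.equivFunOnFinite.symm α + Finsupp.equivFunOnFinite.symm β := by
  ext i; simp

lemma mono_mul (α β : Fin n → ℕ) : mono K α * mono K β = mono K (α + β) := by
  simp [mono, monomial_mul, symm_add]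

lemma symm_le_iff {α β : Fin n → ℕ} :
    Finsupp.equivFunOnFinite.symm α ≤ Finsupp.equivFunOnFinite.symm β ↔ α ≤ β := by
  constructor
  · intro h i; exact h i
  · intro h i; exact h i

/-- staircase of a generating set -/
def stair (A : Set (Fin n → ℕ)) : Set (Fin n → ℕ) := {β | ∃ α ∈ A, α ≤ β}

lemma mem_span_mono {A : Set (Fin n → ℕ)} {β : Fin n → ℕ} :
    mono K β ∈ Ideal.span (mono K '' A) ↔ β ∈ stair A := by
  constructor
  · intro h
    rw [Ideal.span, Submodule.mem_span_set] at h
    obtain ⟨c, hsupp, hsum⟩ := h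
    have h1 : MvPolynomial.coeff (Finsupp.equivFunOnFinite.symm β) (mono K β) = 1 := by
      simp [mono, coeff_monomial]
    rw [← hsum] at h1
    rw [Finsupp.sum] at h1
    rw [MvPolynomial.coeff_sum] at h1
    have : ∃ m ∈ c.support, MvPolynomial.coeff (Finsupp.equivFunOnFinite.symm β)
        (c m • m) ≠ 0 := by
      by_contra hc
      push_neg at hc
      rw [Finset.sum_eq_zero hc] at h1
      exact one_ne_zero h1.symm
    obtain ⟨m, hm, hne⟩ := this
    obtain ⟨α, hα, rfl⟩ := hsupp hm
    refine ⟨α, hα, ?_⟩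
    rw [smul_eq_mul] at hne
    unfold mono at hne
    rw [MvPolynomial.coeff_mul_monomial'] at hne
    by_contra hle
    rw [if_neg] at hne
    · exact hne rfl
    · rw [symm_le_iff]; exact hle
  · rintro ⟨α, hα, hle⟩
    have : mono K β = mono K (β - α) * mono K α := by
      rw [mono_mul]
      congr 1
      funext i
      exact (Nat.sub_add_cancel (hle i)).symm
    rw [this]
    exact Ideal.mul_mem_left _ _ (Ideal.subset_span ⟨α, hα, rfl⟩)

lemma span_mono_mul (A B : Set (Fin n → ℕ)) :
    Ideal.span (mono K '' A) * Ideal.span (mono K '' B) =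
      Ideal.span (mono K '' (A + B)) := by
  rw [Ideal.span_mul_span']
  congr 1
  ext p
  constructor
  · rintro ⟨x, ⟨a, ha, rfl⟩, y, ⟨b, hb, rfl⟩, rfl⟩
    exact ⟨a + b, Set.add_mem_add ha hb, (mono_mul a b).symm⟩
  · rintro ⟨c, ⟨a, ha, b, hb, rfl⟩, rfl⟩
    exact ⟨mono K a, ⟨a, ha, rfl⟩, mono K b, ⟨b, hb, rfl⟩, mono_mul a b⟩

lemma span_mono_pow (A : Set (Fin n → ℕ)) (l : ℕ) :
    (Ideal.span (mono K '' A)) ^ l = Ideal.span (mono K '' nsum l A) := by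
  induction l with
  | zero =>
    simp only [pow_zero, nsum]
    rw [Set.image_singleton]
    have : mono K (0 : Fin n → ℕ) = 1 := by
      have h0 : Finsupp.equivFunOnFinite.symm (0 : Fin n → ℕ) = 0 := by ext i; simp
      rw [mono, h0, monomial_zero']; rfl
    rw [this, Ideal.span_singleton_one, Ideal.one_eq_top]
  | succ l ih =>
    rw [pow_succ, ih, span_mono_mul]
    have : nsum (l+1) A = A + nsum l A := rfl
    rw [this, add_comm A (nsum l A)]

lemma isMinGen_span_iff {A : Set (Fin n → ℕ)} {β : Fin n → ℕ} :
    IsMinGen (Ideal.span (mono K '' A)) β ↔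
      β ∈ stair A ∧ ∀ γ ∈ stair A, γ ≤ β → γ = β := by
  constructor
  · rintro ⟨h1, h2⟩
    exact ⟨mem_span_mono.1 h1, fun γ hγ hle => h2 γ (mem_span_mono.2 hγ) hle⟩
  · rintro ⟨h1, h2⟩
    exact ⟨mem_span_mono.2 h1, fun γ hγ hle => h2 γ (mem_span_mono.1 hγ) hle⟩

lemma exists_min {A : Set (Fin n → ℕ)} :
    ∀ β ∈ stair A, ∃ γ, γ ≤ β ∧ γ ∈ stair A ∧ ∀ δ ∈ stair A, δ ≤ γ → δ = γ := by
  have H : ∀ N : ℕ, ∀ β ∈ stair A, ∑ i, β i ≤ N →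
      ∃ γ, γ ≤ β ∧ γ ∈ stair A ∧ ∀ δ ∈ stair A, δ ≤ γ → δ = γ := by
    intro N
    induction N with
    | zero =>
      intro β hβ hsum
      refine ⟨β, le_refl β, hβ, fun δ hδ hle => ?_⟩
      funext i
      have h1 : β i ≤ ∑ j, β j :=
        Finset.single_le_sum (fun k _ => Nat.zero_le _) (Finset.mem_univ i)
      have h2 : δ i ≤ β i := hle i
      omega
    | succ N ih =>
      intro β hβ hsum
      by_cases hmin : ∀ δ ∈ stair A, δ ≤ β → δ = β
      · exact ⟨β, le_refl β, hβ, hmin⟩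
      · push_neg at hmin
        obtain ⟨δ, hδ, hle, hne⟩ := hmin
        have hlt : ∑ i, δ i < ∑ i, β i := by
          have h1 : ∑ i, δ i ≤ ∑ i, β i := Finset.sum_le_sum (fun i _ => hle i)
          rcases eq_or_lt_of_le h1 with h | h
          · exact absurd (eq_of_le_of_sum_eq hle h) hne
          · exact h
        obtain ⟨γ, h1, h2, h3⟩ := ih δ hδ (by omega)
        exact ⟨γ, le_trans h1 hle, h2, h3⟩
  intro β hβ
  exact H (∑ i, β i) β hβ (le_refl _)

lemma span_minGen {I : Ideal (MvPolynomial (Fin n) K)} (hmon : IsMonomialIdeal I) :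
    I = Ideal.span (mono K '' {α | IsMinGen I α}) := by
  obtain ⟨A, rfl⟩ := hmon
  apply le_antisymm
  · rw [Ideal.span_le]
    rintro _ ⟨α, hα, rfl⟩
    have hst : α ∈ stair A := ⟨α, hα, le_refl α⟩
    obtain ⟨γ, hle, hγ, hmin⟩ := exists_min α hst
    have hg : IsMinGen (Ideal.span (mono K '' A)) γ := isMinGen_span_iff.2 ⟨hγ, hmin⟩
    exact (mem_span_mono
      (A := {α | IsMinGen (Ideal.span (mono K '' A)) α})).2 ⟨γ, hg, hle⟩
  · rw [Ideal.span_le]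
    rintro _ ⟨α, hα, rfl⟩
    exact hα.1

lemma minGen_pow {A : Set (Fin n → ℕ)} {d : ℕ}
    (hAd : ∀ α ∈ A, ∑ i, α i = d) (l : ℕ) :
    {β : Fin n → ℕ | IsMinGen ((Ideal.span (mono K '' A)) ^ l) β} = nsum l A := by
  rw [span_mono_pow]
  have hdeg : ∀ α ∈ nsum l A, ∑ i, α i = l * d := mem_nsum_sum hAd l
  ext β
  rw [Set.mem_setOf_eq, isMinGen_span_iff]
  constructor
  · rintro ⟨⟨α, hα, hle⟩, hmin⟩
    have := hmin α ⟨α, hα, le_refl α⟩ hle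
    rw [← this]
    exact hα
  · intro hβ
    refine ⟨⟨β, hβ, le_refl β⟩, ?_⟩
    rintro γ ⟨α, hα, hle⟩ hγβ
    have h1 : l * d ≤ ∑ i, γ i := by
      rw [← hdeg α hα]
      exact Finset.sum_le_sum (fun i _ => hle i)
    have h2 : ∑ i, γ i ≤ ∑ i, β i := Finset.sum_le_sum (fun i _ => hγβ i)
    rw [hdeg β hβ] at h2
    exact eq_of_le_of_sum_eq hγβ (by rw [hdeg β hβ]; omega)

end Aux

/-- Theorem 11.2: for an `𝔪`-primary monomial ideal `I` equigenerated in degree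
`d` (so `μ_i = x_i^d`), with `J = ⟨x_1^d,…,x_n^d⟩`, the following are equivalent:
(1) `I` is Freiman, i.e. `|G(I²)| = n·|G(I)| − C(n,2)`;
(2) `I` is very good;
(3) `I² = I·J`. -/
theorem freiman_tfae {K : Type*} [Field K] {n : ℕ}
    (I : Ideal (MvPolynomial (Fin n) K)) (d : ℕ) (hd : 0 < d)
    (hI : MPrimaryWithCorners I (fun _ => d))
    (hequi : ∀ α : Fin n → ℕ, IsMinGen I α → ∑ i, α i = d) :
    List.TFAE
      [{α : Fin n → ℕ | IsMinGen (I ^ 2) α}.ncard =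
         n * {α : Fin n → ℕ | IsMinGen I α}.ncard - n.choose 2,
       IsVeryGood I (fun _ => d),
       I ^ 2 = I * Ideal.span (Set.range fun i : Fin n =>
         mono K (Pi.single i d))] := by
  classical
  obtain ⟨hmon, hnetop, hdpos, hcorners⟩ := hI
  set A : Set (Fin n → ℕ) := {α : Fin n → ℕ | IsMinGen I α} with hA
  have hspan : I = Ideal.span (mono K '' A) := span_minGen hmon
  have hAd : ∀ α ∈ A, ∑ i, α i = d := fun α hα => hequi α hα
  have hcor : ∀ i, (Pi.single i d : Fin n → ℕ) ∈ A := fun i => hcorners i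
  have hAfin : A.Finite := by
    apply (Set.Finite.pi (fun i : Fin n => Set.finite_Iic d)).subset
    intro α hα
    rw [Set.mem_univ_pi]
    intro i
    exact coord_le (hAd α hα) i
  set D : Set (Fin n → ℕ) := Set.range (fun i : Fin n => (Pi.single i d : Fin n → ℕ))
    with hD
  have hDA : D ⊆ A := by rintro _ ⟨i, rfl⟩; exact hcor i
  have hGpow : ∀ l : ℕ, {β : Fin n → ℕ | IsMinGen (I ^ l) β} = nsum l A := by
    intro l; rw [hspan]; exact minGen_pow hAd l
  have hG2 : {β : Fin n → ℕ | IsMinGen (I ^ 2) β} = A + A := by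
    rw [hGpow 2, nsum_two]
  have hJ : (Set.range fun i : Fin n => mono K (Pi.single i d)) = mono K '' D := by
    rw [hD, ← Set.range_comp]
    rfl
  have hIJ : I * Ideal.span (Set.range fun i : Fin n => mono K (Pi.single i d)) =
      Ideal.span (mono K '' (A + D)) := by
    rw [hJ, hspan, span_mono_mul]
  have hI2 : I ^ 2 = Ideal.span (mono K '' (A + A)) := by
    rw [hspan, span_mono_pow, nsum_two]
  have hADAA : A + D ⊆ A + A := Set.add_subset_add_left hDA
  have hAA2d : ∀ α ∈ A + A, ∑ i, α i = 2 * d := by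
    intro α hα
    exact mem_nsum_sum hAd 2 α (by rwa [nsum_two])
  have h3iff : (I ^ 2 = I * Ideal.span (Set.range fun i : Fin n => mono K (Pi.single i d)))
      ↔ A + A = A + D := by
    constructor
    · intro h
      refine Set.Subset.antisymm ?_ hADAA
      intro α hα
      have hm : mono K α ∈ Ideal.span (mono K '' (A + D)) := by
        rw [← hIJ, ← h, hI2]
        exact mem_span_mono.2 ⟨α, hα, le_refl α⟩
      obtain ⟨γ, hγ, hle⟩ := mem_span_mono.1 hm
      have hγd : ∑ i, γ i = 2 * d := hAA2d γ (hADAA hγ)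
      have hγα : γ = α := eq_of_le_of_sum_eq hle (by rw [hγd, hAA2d α hα])
      rwa [← hγα]
    · intro h
      rw [hI2, hIJ, h]
  have hfinAA : (A + A).Finite := hAfin.add hAfin
  have hfinAD : (A + D).Finite := hAfin.add (Set.finite_range _)
  have hcount : (A + D).ncard + n.choose 2 = n * A.ncard := card_A_add_D hd hAfin hAd hcor
  tfae_have 1 ↔ 3 := by
    rw [hG2]
    constructor
    · intro h1
      apply h3iff.2
      have hcc : (A + A).ncard ≤ (A + D).ncard := by omega
      exact (Set.eq_of_subset_of_ncard_le hADAA hcc hfinAA).symm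
    · intro h3
      rw [h3iff.1 h3]
      omega
  tfae_have 3 → 2 := by
    intro h3
    have heq : A + A = A + D := h3iff.1 h3
    have hpow : ∀ l : ℕ, nsum (l + 1) A = A + nsum l D := by
      intro l
      induction l with
      | zero => rfl
      | succ l ih =>
        have h1 : nsum (l + 2) A = A + nsum (l + 1) A := rfl
        have h2 : nsum (l + 1) D = D + nsum l D := rfl
        rw [h1, ih, h2, ← add_assoc, heq, add_assoc]
    constructor
    · -- goodness
      intro l hl α hα
      obtain ⟨m, rfl⟩ : ∃ m, l = m + 1 := ⟨l - 1, by omega⟩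
      have hαmem : α ∈ A + nsum m D := by
        rw [← hpow m]
        have : α ∈ {β : Fin n → ℕ | IsMinGen (I ^ (m + 1)) β} := hα
        rwa [hGpow (m + 1)] at this
      obtain ⟨β, hβ, y, hy, hsumeq⟩ := Set.mem_add.1 hαmem
      rw [hD, nsum_corners] at hy
      obtain ⟨b, hb, rfl⟩ := hy
      refine ⟨b, ?_, by simp [hb]⟩
      intro i
      have hci : β i + b i * d = α i := congrFun hsumeq i
      have hβd : β i ≤ d := coord_le (hAd β hβ) i
      constructor
      · show b i * d ≤ α i
        omega
      · show α i ≤ (b i + 1) * d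
        rw [add_mul, one_mul]
        omega
    · -- boxes
      intro a
      have hmem_iff : ∀ α : Fin n → ℕ,
          IsMinGen (I ^ (∑ i, a i + 1)) α ↔ α ∈ A + nsum (∑ i, a i) D := by
        intro α
        rw [← hpow (∑ i, a i)]
        constructor
        · intro h
          have : α ∈ {β : Fin n → ℕ | IsMinGen (I ^ (∑ i, a i + 1)) β} := h
          rwa [hGpow (∑ i, a i + 1)] at this
        · intro h
          have : α ∈ {β : Fin n → ℕ | IsMinGen (I ^ (∑ i, a i + 1)) β} := by
            rw [hGpow (∑ i, a i + 1)]
            exact h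
          exact this
      have himg : (fun α : Fin n → ℕ => α - fun i => a i * d) ''
          {α : Fin n → ℕ | InBox (fun _ => d) a α ∧ IsMinGen (I ^ (∑ i, a i + 1)) α}
          = A := by
        apply Set.Subset.antisymm
        · rintro _ ⟨α, ⟨hbox, hmg⟩, rfl⟩
          obtain ⟨β, hβ, y, hy, hsumeq⟩ := Set.mem_add.1 ((hmem_iff α).1 hmg)
          rw [hD, nsum_corners] at hy
          obtain ⟨b, hb, rfl⟩ := hy
          by_cases hab : b = a
          · subst hab
            have hres : (α - fun i => b i * d) = β := by
              funext j
              have hcj : β j + b j * d = α j := congrFun hsumeq j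
              show α j - b j * d = β j
              omega
            show α - (fun i => b i * d) ∈ A
            rw [hres]
            exact hβ
          · have hanb : ∃ i, b i < a i := by
              by_contra hc
              push_neg at hc
              exact hab (eq_of_le_of_sum_eq hc (by rw [hb])).symm
            obtain ⟨i, hib⟩ := hanb
            have hci : β i + b i * d = α i := congrFun hsumeq i
            have hbox_i : a i * d ≤ α i := (hbox i).1
            have hβi_ge : d ≤ β i := by
              have h1 : (b i + 1) * d ≤ a i * d := Nat.mul_le_mul_right d hib
              rw [add_mul, one_mul] at h1
              omega
            have hβi : β i = d := le_antisymm (coord_le (hAd β hβ) i) hβi_ge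
            have hβsingle : β = Pi.single i d := eq_single_of_coord (hAd β hβ) hβi
            set c : Fin n → ℕ := fun j => b j + (Pi.single i 1 : Fin n → ℕ) j with hc
            have hαc : ∀ j, α j = c j * d := by
              intro j
              have hcj : β j + b j * d = α j := congrFun hsumeq j
              rw [hβsingle] at hcj
              by_cases hj : j = i
              · subst hj
                simp only [Pi.single_eq_same] at hcj
                have h2 : c j = b j + 1 := by simp [hc]
                rw [h2, add_mul, one_mul]
                omega
              · rw [Pi.single_eq_of_ne hj] at hcj
                have h2 : c j = b j := by simp [hc, Pi.single_eq_of_ne hj]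
                rw [h2]
                omega
            have hac : ∀ j, a j ≤ c j := by
              intro j
              have h1 : a j * d ≤ c j * d := by
                rw [← hαc j]
                exact (hbox j).1
              exact Nat.le_of_mul_le_mul_right h1 hd
            have hsumc : ∑ j, c j = ∑ j, a j + 1 := by
              have : ∑ j, c j = ∑ j, b j + ∑ j, (Pi.single i 1 : Fin n → ℕ) j := by
                rw [← Finset.sum_add_distrib]
              rw [this, sum_single, hb]
            have hsume : ∑ j, (c j - a j) = 1 := by
              have hh : ∑ j, (a j + (c j - a j)) = ∑ j, c j :=
                Finset.sum_congr rfl (fun j _ => by have := hac j; omega)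
              rw [Finset.sum_add_distrib] at hh
              omega
            obtain ⟨k, hk⟩ := exists_single_of_sum_eq_one hsume
            have hres : (α - fun j => a j * d) = Pi.single k d := by
              funext j
              show α j - a j * d = (Pi.single k d : Fin n → ℕ) j
              rw [hαc j]
              have hckj : c j - a j = (Pi.single k 1 : Fin n → ℕ) j := congrFun hk j
              by_cases hj : j = k
              · subst hj
                rw [Pi.single_eq_same]
                rw [Pi.single_eq_same] at hckj
                have := hac j
                have h2 : c j = a j + 1 := by omega
                rw [h2, add_mul, one_mul]
                omega
              · rw [Pi.single_eq_of_ne hj]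
                rw [Pi.single_eq_of_ne hj] at hckj
                have := hac j
                have h2 : c j = a j := by omega
                rw [h2]
                omega
            show α - (fun j => a j * d) ∈ A
            rw [hres]
            exact hDA ⟨k, rfl⟩
        · intro γ hγ
          refine ⟨γ + fun i => a i * d, ⟨?_, ?_⟩, ?_⟩
          · intro i
            have hγd : γ i ≤ d := coord_le (hAd γ hγ) i
            constructor
            · show a i * d ≤ γ i + a i * d
              omega
            · show γ i + a i * d ≤ (a i + 1) * d
              rw [add_mul, one_mul]
              omega
          · apply (hmem_iff _).2
            refine ⟨γ, hγ, fun j => a j * d, ?_, rfl⟩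
            rw [hD, nsum_corners]
            exact ⟨a, rfl, rfl⟩
          · funext j
            show γ j + a j * d - a j * d = γ j
            omega
      show boxIdeal I (fun _ => d) a = I
      unfold boxIdeal
      rw [show (fun α : Fin n → ℕ => mono K (α - fun i => a i * (fun _ : Fin n => d) i))
          = mono K ∘ (fun α : Fin n → ℕ => α - fun i => a i * d) from rfl]
      rw [Set.image_comp, himg, ← hspan]
  tfae_have 2 → 3 := by
    rintro ⟨hgood, hboxes⟩
    apply h3iff.2
    refine Set.Subset.antisymm ?_ hADAA
    intro α hα
    have hmg : IsMinGen (I ^ 2) α := by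
      have : α ∈ {β : Fin n → ℕ | IsMinGen (I ^ 2) β} := by
        rw [hG2]; exact hα
      exact this
    obtain ⟨a, hbox, hsa⟩ := hgood 2 one_le_two α hmg
    obtain ⟨i, rfl⟩ := exists_single_of_sum_eq_one hsa
    have hsum1 : ∑ j, (Pi.single i 1 : Fin n → ℕ) j = 1 := sum_single i 1
    have hmono : mono K (α - fun j => (Pi.single i 1 : Fin n → ℕ) j * d) ∈ I := by
      rw [← hboxes (Pi.single i 1)]
      unfold boxIdeal
      apply Ideal.subset_span
      refine ⟨α, ⟨hbox, ?_⟩, rfl⟩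
      have h2 : (∑ j, (Pi.single i 1 : Fin n → ℕ) j) + 1 = 2 := by rw [hsum1]
      rw [h2]
      exact hmg
    rw [hspan, mem_span_mono] at hmono
    obtain ⟨γ', hγ', hle⟩ := hmono
    have hαd : ∑ j, α j = 2 * d := hAA2d α hα
    have hαi : d ≤ α i := by
      have h1 : (Pi.single i 1 : Fin n → ℕ) i * (fun _ : Fin n => d) i ≤ α i := (hbox i).1
      simpa using h1
    have hsub_add : ∀ j, (α - fun j => (Pi.single i 1 : Fin n → ℕ) j * d) j
        + (Pi.single i 1 : Fin n → ℕ) j * d = α j := by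
      intro j
      by_cases hj : j = i
      · subst hj
        show α j - (Pi.single j 1 : Fin n → ℕ) j * d + (Pi.single j 1 : Fin n → ℕ) j * d = α j
        rw [Pi.single_eq_same, one_mul]
        omega
      · show α j - (Pi.single i 1 : Fin n → ℕ) j * d + (Pi.single i 1 : Fin n → ℕ) j * d = α j
        rw [Pi.single_eq_of_ne hj]
        omega
    have hsingles : ∑ j, (Pi.single i 1 : Fin n → ℕ) j * d = d := by
      have he : ∀ j, (Pi.single i 1 : Fin n → ℕ) j * d = (Pi.single i d : Fin n → ℕ) j := by
        intro j
        by_cases hj : j = i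
        · subst hj; rw [Pi.single_eq_same, Pi.single_eq_same, one_mul]
        · rw [Pi.single_eq_of_ne hj, Pi.single_eq_of_ne hj, zero_mul]
      rw [Finset.sum_congr rfl (fun j _ => he j), sum_single]
    have hγd : ∑ j, (α - fun j => (Pi.single i 1 : Fin n → ℕ) j * d) j = d := by
      have h1 : ∑ j, ((α - fun j => (Pi.single i 1 : Fin n → ℕ) j * d) j
          + (Pi.single i 1 : Fin n → ℕ) j * d) = ∑ j, α j :=
        Finset.sum_congr rfl (fun j _ => hsub_add j)
      rw [Finset.sum_add_distrib, hsingles] at h1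
      omega
    have hγeq : γ' = (α - fun j => (Pi.single i 1 : Fin n → ℕ) j * d) :=
      eq_of_le_of_sum_eq hle (by rw [hγd, hAd γ' hγ'])
    refine Set.mem_add.2 ⟨(α - fun j => (Pi.single i 1 : Fin n → ℕ) j * d),
      hγeq ▸ hγ', Pi.single i d, ⟨i, rfl⟩, ?_⟩
    funext j
    show (α - fun j => (Pi.single i 1 : Fin n → ℕ) j * d) j
      + (Pi.single i d : Fin n → ℕ) j = α j
    by_cases hj : j = i
    · subst hj
      show α j - (Pi.single j 1 : Fin n → ℕ) j * d + (Pi.single j d : Fin n → ℕ) j = α j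
      rw [Pi.single_eq_same, Pi.single_eq_same, one_mul]
      omega
    · show α j - (Pi.single i 1 : Fin n → ℕ) j * d + (Pi.single i d : Fin n → ℕ) j = α j
      rw [Pi.single_eq_of_ne hj, Pi.single_eq_of_ne hj]
      omega
  tfae_finish

end GasanovaRR
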